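/- Impossibility theorem, part 2 (Features 1 and 3 exclude Feature 2): Let H_W and H_S be Hermitian matrices on ℂ^{d_W} and ℂ^{d_S}, kT > 0, and let {φ_x}_{x∈X} (|X| = d_S) be an orthonormal basis of ℂ^{d_S} consisting of eigenvectors of H_S. For each x ∈ X let U_x be a unitary on ℂ^{d_W} ⊗ ℂ^{d_S} with [U_x, H_W ⊗ 1 + 1 ⊗ H_S] = 0, let ρ_W be a density matrix on ℂ^{d_W}, set ρ'_{W,x} := tr₂[U_x(ρ_W ⊗ |φ_x⟩⟨φ_x|)U_x†] and W_x := F_{H_W}(ρ'_{W,x}) − F_{H_W}(ρ_W). If W_x > 0 for all x ∈ X, then there exists x ∈ X with S(ρ'_{W,x}) < S(ρ_W). -/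

import Mathlib

open Matrix
open scoped Kronecker Matrix ComplexOrder

noncomputable section

/-- A density matrix: positive semidefinite with unit trace. -/
def IsDensityMatrix {n : Type*} [Fintype n] (ρ : Matrix n n ℂ) : Prop :=
  ρ.PosSemidef ∧ ρ.trace = 1

/-- von Neumann entropy `S(ρ) = -∑ λᵢ log λᵢ` (junk value 0 if not Hermitian). -/
noncomputable def vnEntropy {n : Type*} [Fintype n] [DecidableEq n]
    (ρ : Matrix n n ℂ) : ℝ :=
  if h : ρ.IsHermitian then -∑ i, (h.eigenvalues i) * Real.log (h.eigenvalues i) else 0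

/-- Non-equilibrium free energy `F(ρ) = tr(Hρ) - kT S(ρ)`. -/
noncomputable def freeEnergy {n : Type*} [Fintype n] [DecidableEq n]
    (kT : ℝ) (H ρ : Matrix n n ℂ) : ℝ :=
  (Matrix.trace (H * ρ)).re - kT * vnEntropy ρ

/-- Least eigenvalue of a Hermitian matrix (junk value 0 if not Hermitian). -/
noncomputable def lambdaMin {n : Type*} [Fintype n] [DecidableEq n]
    (H : Matrix n n ℂ) : ℝ :=
  if h : H.IsHermitian then ⨅ i, h.eigenvalues i else 0

/-- Partial trace over the second tensor factor. -/
def ptrace2 {m n : Type*} [Fintype n]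
    (σ : Matrix (m × n) (m × n) ℂ) : Matrix m m ℂ :=
  fun i j => ∑ k, σ (i, k) (j, k)

/-- Partial trace over the first tensor factor. -/
def ptrace1 {m n : Type*} [Fintype m]
    (σ : Matrix (m × n) (m × n) ℂ) : Matrix n n ℂ :=
  fun k l => ∑ i, σ (i, k) (i, l)

/-- Outer product `|v⟩⟨v|`. -/
def outer {n : Type*} (v : n → ℂ) : Matrix n n ℂ :=
  Matrix.vecMulVec v (star v)

/-- Kronecker product of vectors. -/
def kronVec {m n : Type*} (v : m → ℂ) (w : n → ℂ) : m × n → ℂ :=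
  fun p => v p.1 * w p.2

section Helpers

set_option linter.unusedSectionVars false

variable {m n : Type*} [Fintype m] [Fintype n] [DecidableEq m] [DecidableEq n]

lemma my_kron_conjT {l m p q : Type*} (A : Matrix l m ℂ) (B : Matrix p q ℂ) :
    (A ⊗ₖ B)ᴴ = Aᴴ ⊗ₖ Bᴴ := by
  ext ⟨i,k⟩ ⟨j,l⟩
  simp [conjTranspose_apply, kroneckerMap_apply, star_mul']

lemma my_trace_kron_one (A : Matrix m m ℂ) (σ : Matrix (m × n) (m × n) ℂ) :
    trace ((A ⊗ₖ (1 : Matrix n n ℂ)) * σ) = trace (A * ptrace2 σ) := by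
  simp only [Matrix.trace, Matrix.diag, Matrix.mul_apply, ptrace2,
    Matrix.kroneckerMap_apply, Matrix.one_apply, mul_ite, mul_one, mul_zero,
    ite_mul, zero_mul, Fintype.sum_prod_type, Finset.sum_ite_eq,
    Finset.sum_ite_eq', Finset.mem_univ, if_true, Finset.mul_sum, Finset.sum_mul]
  exact Finset.sum_congr rfl fun x _ => Finset.sum_comm

lemma my_trace_one_kron (B : Matrix n n ℂ) (σ : Matrix (m × n) (m × n) ℂ) :
    trace (((1 : Matrix m m ℂ) ⊗ₖ B) * σ) = trace (B * ptrace1 σ) := by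
  simp only [Matrix.trace, Matrix.diag, Matrix.mul_apply, ptrace1,
    Matrix.kroneckerMap_apply, Matrix.one_apply, mul_ite, mul_one, mul_zero,
    ite_mul, zero_mul, one_mul, Fintype.sum_prod_type, Finset.sum_ite_eq,
    Finset.sum_ite_eq', Finset.mem_univ, if_true, Finset.mul_sum, Finset.sum_mul,
    Finset.sum_ite_irrel, Finset.sum_const_zero]
  exact Finset.sum_comm.trans (Finset.sum_congr rfl fun _ _ => Finset.sum_comm)

lemma my_trace_ptrace1 (σ : Matrix (m × n) (m × n) ℂ) :
    trace (ptrace1 σ) = trace σ := by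
  simp only [Matrix.trace, Matrix.diag, ptrace1, Fintype.sum_prod_type]
  exact Finset.sum_comm

lemma my_ptrace1_quadform (σ : Matrix (m × n) (m × n) ℂ) (w : n → ℂ) :
    star w ⬝ᵥ (ptrace1 σ).mulVec w
      = ∑ i, star (fun p : m × n => if p.1 = i then w p.2 else 0) ⬝ᵥ
          σ.mulVec (fun p : m × n => if p.1 = i then w p.2 else 0) := by
  simp only [dotProduct, mulVec, ptrace1, Pi.star_apply, apply_ite, star_zero,
    Fintype.sum_prod_type, ite_mul, zero_mul, mul_ite, mul_zero,
    Finset.sum_ite_eq, Finset.sum_ite_eq', Finset.mem_univ, if_true,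
    Finset.mul_sum, Finset.sum_mul, Finset.sum_ite_irrel, Finset.sum_const_zero]
  exact (Finset.sum_congr rfl fun _ _ => Finset.sum_comm).trans Finset.sum_comm

lemma my_mul_vecMulVec (A : Matrix n n ℂ) (v w : n → ℂ) :
    A * Matrix.vecMulVec v w = Matrix.vecMulVec (A.mulVec v) w := by
  ext i j
  simp [Matrix.mul_apply, Matrix.vecMulVec_apply, Matrix.mulVec, dotProduct,
    Finset.sum_mul, mul_assoc]

lemma my_trace_outer (v : n → ℂ) : trace (outer v) = star v ⬝ᵥ v := by
  simp [outer, Matrix.trace, Matrix.diag, Matrix.vecMulVec_apply, dotProduct, mul_comm]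

lemma my_trace_mul_outer (A : Matrix n n ℂ) (v : n → ℂ) :
    trace (A * outer v) = star v ⬝ᵥ A.mulVec v := by
  simp only [outer, Matrix.trace, Matrix.diag, Matrix.mul_apply,
    Matrix.vecMulVec_apply, dotProduct, Matrix.mulVec, Pi.star_apply]
  refine Finset.sum_congr rfl fun i _ => ?_
  rw [Finset.mul_sum]
  exact Finset.sum_congr rfl fun j _ => by ring

lemma my_sum_outer {X : Type*} [Fintype X] [DecidableEq X] {d : ℕ}
    (φ : X → (Fin d → ℂ)) (hcard : Fintype.card X = d)
    (hφON : ∀ x y, star (φ x) ⬝ᵥ φ y = if x = y then 1 else 0) :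
    ∑ x, outer (φ x) = (1 : Matrix (Fin d) (Fin d) ℂ) := by
  have e : X ≃ Fin d := Fintype.equivFinOfCardEq hcard
  set V : Matrix (Fin d) (Fin d) ℂ := Matrix.of fun i j => φ (e.symm j) i with hV
  have hVV : Vᴴ * V = 1 := by
    ext i j
    have h := hφON (e.symm i) (e.symm j)
    simp only [Matrix.mul_apply, conjTranspose_apply, hV, Matrix.of_apply,
      Matrix.one_apply]
    rw [show (∑ k, star (φ (e.symm i) k) * φ (e.symm j) k)
        = star (φ (e.symm i)) ⬝ᵥ φ (e.symm j) from rfl, h]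
    simp
  have hVV' : V * Vᴴ = 1 := mul_eq_one_comm.mp hVV
  ext i j
  have h2 := congrFun (congrFun hVV' i) j
  simp only [Matrix.mul_apply, conjTranspose_apply, hV, Matrix.of_apply] at h2
  rw [Matrix.sum_apply]
  rw [show (∑ x, outer (φ x) i j) = ∑ x, φ x i * star (φ x j) from
    Finset.sum_congr rfl fun x _ => rfl]
  rw [← Equiv.sum_comp e.symm (fun x => φ x i * star (φ x j))]
  exact h2

end Helpers

/-- Impossibility theorem, part 2: repeatable measurement (Feature 1) plus
strictly positive work extraction for all outcomes (Feature 3) force the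
weight's entropy to strictly decrease for some outcome (negating Feature 2). -/
theorem features_one_three_exclude_two
    {dW dS : ℕ} {X : Type*} [Fintype X] [DecidableEq X]
    (hdS : 0 < dS)
    (HW : Matrix (Fin dW) (Fin dW) ℂ) (HS : Matrix (Fin dS) (Fin dS) ℂ)
    (hHW : HW.IsHermitian) (hHS : HS.IsHermitian)
    (kT : ℝ) (hkT : 0 < kT)
    (φ : X → (Fin dS → ℂ))
    (hcard : Fintype.card X = dS)
    (hφON : ∀ x y, star (φ x) ⬝ᵥ φ y = if x = y then 1 else 0)
    (hφeig : ∀ x, ∃ μ : ℝ, HS.mulVec (φ x) = (μ : ℂ) • φ x)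
    (U : X → Matrix (Fin dW × Fin dS) (Fin dW × Fin dS) ℂ)
    (hU : ∀ x, U x ∈ Matrix.unitaryGroup (Fin dW × Fin dS) ℂ)
    (hUcomm : ∀ x, U x * (HW ⊗ₖ (1 : Matrix (Fin dS) (Fin dS) ℂ)
        + (1 : Matrix (Fin dW) (Fin dW) ℂ) ⊗ₖ HS)
      = (HW ⊗ₖ (1 : Matrix (Fin dS) (Fin dS) ℂ)
        + (1 : Matrix (Fin dW) (Fin dW) ℂ) ⊗ₖ HS) * U x)
    (ρW : Matrix (Fin dW) (Fin dW) ℂ) (hρW : IsDensityMatrix ρW)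
    (hW : ∀ x, 0 < freeEnergy kT HW (ptrace2 (U x * (ρW ⊗ₖ outer (φ x)) * (U x)ᴴ))
        - freeEnergy kT HW ρW) :
    ∃ x, vnEntropy (ptrace2 (U x * (ρW ⊗ₖ outer (φ x)) * (U x)ᴴ))
        < vnEntropy ρW := by
  classical
  by_contra hcon
  push_neg at hcon
  have hXne : Nonempty X := by
    rw [← Fintype.card_pos_iff, hcard]; exact hdS
  choose μ hμ using hφeig
  obtain ⟨x₀, -, hx₀⟩ := Finset.exists_min_image (Finset.univ : Finset X) μ
    ⟨Classical.arbitrary X, Finset.mem_univ _⟩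
  set Htot := HW ⊗ₖ (1 : Matrix (Fin dS) (Fin dS) ℂ)
    + (1 : Matrix (Fin dW) (Fin dW) ℂ) ⊗ₖ HS with hHtot
  set σ : X → Matrix (Fin dW × Fin dS) (Fin dW × Fin dS) ℂ :=
    fun x => U x * (ρW ⊗ₖ outer (φ x)) * (U x)ᴴ with hσ
  have hU1 : ∀ x, (U x)ᴴ * U x = 1 := fun x => by
    simpa [Matrix.star_eq_conjTranspose] using (hU x).1
  have htrP : ∀ x, trace (outer (φ x)) = 1 := fun x => by
    rw [my_trace_outer]; simpa using hφON x x
  have hHSP : ∀ x, HS * outer (φ x) = (μ x : ℂ) • outer (φ x) := by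
    intro x
    rw [outer, my_mul_vecMulVec, hμ x]
    ext i j
    simp [Matrix.vecMulVec_apply, smul_eq_mul]
    ring
  have htrHSP : ∀ x, trace (HS * outer (φ x)) = (μ x : ℂ) := fun x => by
    rw [hHSP x, trace_smul, htrP x, smul_eq_mul, mul_one]
  have henergy : ∀ x, trace (HW * ptrace2 (σ x)) + trace (HS * ptrace1 (σ x))
      = trace (HW * ρW) + (μ x : ℂ) := by
    intro x
    have hcomm : Htot * σ x = U x * (Htot * (ρW ⊗ₖ outer (φ x)) * (U x)ᴴ) := by
      rw [hσ]
      calc Htot * (U x * (ρW ⊗ₖ outer (φ x)) * (U x)ᴴ)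
          = (Htot * U x) * ((ρW ⊗ₖ outer (φ x)) * (U x)ᴴ) := by
            simp only [Matrix.mul_assoc]
        _ = (U x * Htot) * ((ρW ⊗ₖ outer (φ x)) * (U x)ᴴ) := by rw [← hUcomm x]
        _ = U x * (Htot * (ρW ⊗ₖ outer (φ x)) * (U x)ᴴ) := by
            simp only [Matrix.mul_assoc]
    have h1 : trace (Htot * σ x) = trace (Htot * (ρW ⊗ₖ outer (φ x))) := by
      rw [hcomm, Matrix.trace_mul_comm,
        Matrix.mul_assoc (Htot * (ρW ⊗ₖ outer (φ x))), hU1 x, Matrix.mul_one]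
    have hL : trace (Htot * σ x)
        = trace (HW * ptrace2 (σ x)) + trace (HS * ptrace1 (σ x)) := by
      rw [hHtot, Matrix.add_mul, trace_add, my_trace_kron_one, my_trace_one_kron]
    have hR : trace (Htot * (ρW ⊗ₖ outer (φ x))) = trace (HW * ρW) + (μ x : ℂ) := by
      rw [hHtot, Matrix.add_mul, trace_add, ← Matrix.mul_kronecker_mul,
        ← Matrix.mul_kronecker_mul, trace_kronecker, trace_kronecker]
      simp [Matrix.one_mul, htrP, htrHSP, hρW.2]
    rw [← hL, h1, hR]
  have hMps : ∀ x, (ρW ⊗ₖ outer (φ x)).PosSemidef := by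
    intro x
    obtain ⟨B, hB⟩ : ∃ B : Matrix (Fin dW) (Fin dW) ℂ, ρW = Bᴴ * B := by
      open MatrixOrder in
      obtain ⟨X, hX, -, hXX⟩ := CFC.exists_sqrt_of_isSelfAdjoint_of_quasispectrumRestricts
        hρW.1.isHermitian (QuasispectrumRestricts.nnreal_of_nonneg hρW.1.nonneg)
      exact ⟨X, by rw [← hXX, ← star_eq_conjTranspose, hX.star_eq]⟩
    have hout : outer (φ x)
        = (Matrix.of fun (_ : Unit) j => star (φ x j))ᴴ
          * (Matrix.of fun (_ : Unit) j => star (φ x j)) := by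
      ext i j
      simp [outer, Matrix.vecMulVec_apply, Matrix.mul_apply, conjTranspose_apply,
        mul_comm]
    rw [hB, hout, Matrix.mul_kronecker_mul, ← my_kron_conjT]
    exact posSemidef_conjTranspose_mul_self _
  have hσps : ∀ x, (σ x).PosSemidef := fun x =>
    (hMps x).mul_mul_conjTranspose_same (U x)
  have hpnn : ∀ x y, (0 : ℂ) ≤ star (φ y) ⬝ᵥ (ptrace1 (σ x)).mulVec (φ y) := by
    intro x y
    rw [my_ptrace1_quadform]
    exact Finset.sum_nonneg fun i _ => (hσps x).dotProduct_mulVec_nonneg _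
  have htrσ : ∀ x, trace (σ x) = 1 := by
    intro x
    rw [hσ]
    rw [Matrix.trace_mul_comm, ← Matrix.mul_assoc, hU1 x, Matrix.one_mul,
      trace_kronecker, htrP, hρW.2, one_mul]
  have hsum_outer : ∑ y, outer (φ y) = (1 : Matrix (Fin dS) (Fin dS) ℂ) :=
    my_sum_outer φ hcard hφON
  have hsum_p : ∀ x, ∑ y, star (φ y) ⬝ᵥ (ptrace1 (σ x)).mulVec (φ y) = 1 := by
    intro x
    calc ∑ y, star (φ y) ⬝ᵥ (ptrace1 (σ x)).mulVec (φ y)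
        = ∑ y, trace (ptrace1 (σ x) * outer (φ y)) :=
          Finset.sum_congr rfl fun y _ => (my_trace_mul_outer _ _).symm
      _ = trace (ptrace1 (σ x) * ∑ y, outer (φ y)) := by
          rw [Finset.mul_sum, trace_sum]
      _ = 1 := by rw [hsum_outer, Matrix.mul_one, my_trace_ptrace1, htrσ x]
  have hHSτ : ∀ x, trace (HS * ptrace1 (σ x))
      = ∑ y, (μ y : ℂ) * (star (φ y) ⬝ᵥ (ptrace1 (σ x)).mulVec (φ y)) := by
    intro x
    calc trace (HS * ptrace1 (σ x)) = trace (ptrace1 (σ x) * HS) :=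
          Matrix.trace_mul_comm _ _
      _ = trace (ptrace1 (σ x) * HS * ∑ y, outer (φ y)) := by
          rw [hsum_outer, Matrix.mul_one]
      _ = ∑ y, trace (ptrace1 (σ x) * (HS * outer (φ y))) := by
          rw [Finset.mul_sum, trace_sum]
          exact Finset.sum_congr rfl fun y _ => by rw [Matrix.mul_assoc]
      _ = ∑ y, (μ y : ℂ) * (star (φ y) ⬝ᵥ (ptrace1 (σ x)).mulVec (φ y)) := by
          refine Finset.sum_congr rfl fun y _ => ?_
          rw [hHSP y, Matrix.mul_smul, trace_smul, my_trace_mul_outer,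
            smul_eq_mul]
  have hpre : ∀ x y, 0 ≤ (star (φ y) ⬝ᵥ (ptrace1 (σ x)).mulVec (φ y)).re
      ∧ (star (φ y) ⬝ᵥ (ptrace1 (σ x)).mulVec (φ y)).im = 0 := by
    intro x y
    have h := hpnn x y
    rw [Complex.le_def] at h
    constructor
    · simpa using h.1
    · simpa using h.2.symm
  have hreHSτ : ∀ x, (trace (HS * ptrace1 (σ x))).re
      = ∑ y, μ y * (star (φ y) ⬝ᵥ (ptrace1 (σ x)).mulVec (φ y)).re := by
    intro x
    rw [hHSτ x, Complex.re_sum]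
    exact Finset.sum_congr rfl fun y _ => by simp [Complex.mul_re]
  have hsump_re : ∀ x, ∑ y, (star (φ y) ⬝ᵥ (ptrace1 (σ x)).mulVec (φ y)).re = 1 := by
    intro x
    have h := congrArg Complex.re (hsum_p x)
    rw [Complex.re_sum] at h
    simpa using h
  have hlow : (μ x₀ : ℝ) ≤ (trace (HS * ptrace1 (σ x₀))).re := by
    rw [hreHSτ x₀]
    calc (μ x₀ : ℝ) = ∑ y, μ x₀ * (star (φ y) ⬝ᵥ (ptrace1 (σ x₀)).mulVec (φ y)).re := by
          rw [← Finset.mul_sum, hsump_re, mul_one]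
      _ ≤ ∑ y, μ y * (star (φ y) ⬝ᵥ (ptrace1 (σ x₀)).mulVec (φ y)).re :=
          Finset.sum_le_sum fun y _ =>
            mul_le_mul_of_nonneg_right (hx₀ y (Finset.mem_univ y)) (hpre x₀ y).1
  have hen := congrArg Complex.re (henergy x₀)
  simp only [Complex.add_re, Complex.ofReal_re] at hen
  have hfe := hW x₀
  have hS := hcon x₀
  simp only [freeEnergy] at hfe
  nlinarith [mul_nonneg hkT.le (sub_nonneg.mpr hS), hlow, hen, hfe]
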